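/- For 1 ≤ K < d integers, λ ∈ (0,1), and u ∈ (0,1), the derivative of u ↦ T_λ(u)/u is strictly positive, where T_λ(u) = (λ/K) Σ_{j=0}^{K-1} (K-j) C(d,j) u^{d-j} (1-u)^j. Equivalently, (T_λ(u)/u)' = (d-K)(λ/K) u^{d-2} Σ_{j=0}^{K-1} C(d,j) ((1-u)/u)^j > 0. -/

import Mathlib

open Real Finset

theorem stmt_6 (K d : ℕ) (hK : 1 ≤ K) (hKd : K < d)
    (l u : ℝ) (hl : l ∈ Set.Ioo (0:ℝ) 1) (hu : u ∈ Set.Ioo (0:ℝ) 1) :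
    HasDerivAt
      (fun v : ℝ =>
        ((l / K) * ∑ j ∈ Finset.range K,
            ((K:ℝ) - j) * (d.choose j) * v ^ (d - j) * (1 - v) ^ j) / v)
      (((d:ℝ) - K) * (l / K) * u ^ (d - 2) *
        ∑ j ∈ Finset.range K, (d.choose j) * ((1 - u) / u) ^ j) u ∧
    0 < ((d:ℝ) - K) * (l / K) * u ^ (d - 2) *
        ∑ j ∈ Finset.range K, (d.choose j) * ((1 - u) / u) ^ j := by
  obtain ⟨hu0, hu1⟩ := hu
  obtain ⟨hl0, _⟩ := hl
  have hK0 : (0:ℝ) < K := by exact_mod_cast hK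
  have hKdR : (K:ℝ) < d := by exact_mod_cast hKd
  have hdK : (0:ℝ) < (d:ℝ) - K := by linarith
  constructor
  · have hg : HasDerivAt
        (fun v : ℝ => (l / K) * ∑ j ∈ Finset.range K,
            ((K:ℝ) - j) * (d.choose j) * v ^ (d - j) * (1 - v) ^ j)
        ((l / K) * ∑ j ∈ Finset.range K,
            (((K:ℝ) - j) * (d.choose j)) *
              ((↑(d - j) * u ^ (d - j - 1)) * (1 - u) ^ j
               + u ^ (d - j) * ((j:ℝ) * (1 - u) ^ (j - 1) * (0 - 1)))) u := by
      apply HasDerivAt.const_mul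
      apply HasDerivAt.fun_sum
      intro j hj
      have h1 : HasDerivAt (fun v : ℝ => v ^ (d - j)) (↑(d - j) * u ^ (d - j - 1)) u :=
        hasDerivAt_pow _ u
      have h2 : HasDerivAt (fun v : ℝ => (1 - v) ^ j)
          ((j:ℝ) * (1 - u) ^ (j - 1) * (0 - 1)) u :=
        ((hasDerivAt_const u (1:ℝ)).sub (hasDerivAt_id u)).pow j
      have h3 := (h1.mul h2).const_mul (((K:ℝ) - j) * (d.choose j))
      have hfun : (fun v : ℝ => ((K:ℝ) - j) * (d.choose j) * v ^ (d - j) * (1 - v) ^ j)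
          = fun v : ℝ => (((K:ℝ) - j) * (d.choose j)) * (v ^ (d - j) * (1 - v) ^ j) := by
        funext v; ring
      rw [hfun]
      exact h3
    have hf := hg.fun_div (hasDerivAt_id u) hu0.ne'
    refine hf.congr_deriv (Eq.symm ?_)
    simp only [id_eq]
    rw [eq_div_iff (by positivity : (u:ℝ)^2 ≠ 0)]
    set Q : ℕ → ℝ := fun j =>
      ((K:ℝ) - j) * (d.choose j) * (j:ℝ) * u ^ (d - j) * (1 - u) ^ (j - 1) * u with hQdef
    have hID : (∑ j ∈ Finset.range K,
            (((K:ℝ) - j) * (d.choose j)) *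
              ((↑(d - j) * u ^ (d - j - 1)) * (1 - u) ^ j
               + u ^ (d - j) * ((j:ℝ) * (1 - u) ^ (j - 1) * (0 - 1)))) * u
        - ∑ j ∈ Finset.range K, ((K:ℝ) - j) * (d.choose j) * u ^ (d - j) * (1 - u) ^ j
        = ((d:ℝ) - K) * ∑ j ∈ Finset.range K, (d.choose j : ℝ) * u ^ (d - j) * (1 - u) ^ j := by
      have htel : ∑ j ∈ Finset.range K, (Q (j+1) - Q j) = Q K - Q 0 :=
        Finset.sum_range_sub Q K
      have hQK : Q K = 0 := by simp [hQdef]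
      have hQ0 : Q 0 = 0 := by simp [hQdef]
      calc (∑ j ∈ Finset.range K,
            (((K:ℝ) - j) * (d.choose j)) *
              ((↑(d - j) * u ^ (d - j - 1)) * (1 - u) ^ j
               + u ^ (d - j) * ((j:ℝ) * (1 - u) ^ (j - 1) * (0 - 1)))) * u
        - ∑ j ∈ Finset.range K, ((K:ℝ) - j) * (d.choose j) * u ^ (d - j) * (1 - u) ^ j
          = ∑ j ∈ Finset.range K,
              (((d:ℝ) - K) * ((d.choose j : ℝ) * u ^ (d - j) * (1 - u) ^ j)
                + (Q (j+1) - Q j)) := by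
            rw [Finset.sum_mul, ← Finset.sum_sub_distrib]
            apply Finset.sum_congr rfl
            intro j hj
            have hjK : j < K := Finset.mem_range.mp hj
            have hjd : j < d := lt_trans hjK hKd
            have e1 : d - j = (d - j - 1) + 1 := by omega
            have e2 : d - (j + 1) = d - j - 1 := by omega
            have e3 : (j + 1) - 1 = j := by omega
            have hc : ((j:ℝ) + 1) * (d.choose (j+1)) = ((d:ℝ) - j) * (d.choose j) := by
              have h' : (d.choose (j+1) * (j+1) : ℕ) = d.choose j * (d - j) :=
                Nat.choose_succ_right_eq d j
              have h'' := congrArg (Nat.cast : ℕ → ℝ) h'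
              push_cast [Nat.cast_sub hjd.le] at h''
              linarith
            have hcast : ((d - j : ℕ) : ℝ) = (d:ℝ) - j := by
              push_cast [Nat.cast_sub hjd.le]; ring
            simp only [hQdef]
            rw [hcast, show u ^ (d - (j+1)) = u ^ (d - j - 1) from by rw [e2],
              show (1 - u) ^ ((j+1) - 1) = (1 - u) ^ j from by rw [e3],
              show u ^ (d - j) = u ^ (d - j - 1) * u from by conv_lhs => rw [e1, pow_succ]]
            push_cast
            linear_combination (-((K:ℝ) - j - 1) * u ^ (d - j - 1) * u * (1 - u) ^ j) * hc
        _ = ((d:ℝ) - K) * ∑ j ∈ Finset.range K, (d.choose j : ℝ) * u ^ (d - j) * (1 - u) ^ j := by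
            rw [Finset.sum_add_distrib, htel, hQK, hQ0, ← Finset.mul_sum]
            ring
    have hID2 : u ^ (d - 2) * (∑ j ∈ Finset.range K, (d.choose j : ℝ) * ((1 - u) / u) ^ j) * u ^ 2
        = ∑ j ∈ Finset.range K, (d.choose j : ℝ) * u ^ (d - j) * (1 - u) ^ j := by
      rw [Finset.mul_sum, Finset.sum_mul]
      apply Finset.sum_congr rfl
      intro j hj
      have hjK : j < K := Finset.mem_range.mp hj
      have hjd : j + 2 ≤ d := by omega
      have e1 : d - 2 = (d - 2 - j) + j := by omega
      have e2 : d - j = (d - 2 - j) + 2 := by omega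
      rw [div_pow, e1, e2, pow_add, pow_add]
      field_simp
    linear_combination (-(l / K)) * hID + ((d:ℝ) - K) * (l / K) * hID2
  · have hsum : 0 < ∑ j ∈ Finset.range K, (d.choose j : ℝ) * ((1 - u) / u) ^ j := by
      apply Finset.sum_pos
      · intro j hj
        have hjd : j < d := lt_trans (Finset.mem_range.mp hj) hKd
        have h1 : (0:ℝ) < d.choose j := by exact_mod_cast Nat.choose_pos hjd.le
        have h2 : (0:ℝ) < (1 - u) / u := div_pos (by linarith) hu0
        exact mul_pos h1 (pow_pos h2 j)
      · exact Finset.nonempty_range_iff.mpr (by omega)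
    have hlK : 0 < l / K := div_pos hl0 hK0
    have hup : 0 < u ^ (d - 2) := pow_pos hu0 _
    exact mul_pos (mul_pos (mul_pos hdK hlK) hup) hsum
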